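/- A weighted projective space ℙ(λ₀,…,λₙ) is Gorenstein if and only if λⱼ divides h := Σᵢλᵢ for every j. Reformulated combinatorially: the lattice simplex P with primitive vertices ρ₀,…,ρₙ generating ℤⁿ and satisfying Σᵢλᵢρᵢ = 0 is reflexive if and only if λⱼ ∣ Σᵢλᵢ for all j ∈ {0,…,n}. -/

import Mathlib

/-- The real vector associated to an integer vector. -/
def coeVec {n : ℕ} (v : Fin n → ℤ) : Fin n → ℝ := fun j => (v j : ℝ)

/-- The dual polytope Q^∨ = { u : ⟨u,v⟩ ≥ −1 for all v ∈ Q }. -/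
def dualPolytope {n : ℕ} (Q : Set (Fin n → ℝ)) : Set (Fin n → ℝ) :=
  {u | ∀ v ∈ Q, -1 ≤ ∑ i, u i * v i}

/-- A lattice polytope: the convex hull of finitely many lattice points. -/
def IsLatticePolytope {n : ℕ} (Q : Set (Fin n → ℝ)) : Prop :=
  ∃ S : Finset (Fin n → ℤ), Q = convexHull ℝ (coeVec '' (S : Set (Fin n → ℤ)))

/-- A reflexive polytope: a lattice polytope with 0 in its interior whose dual is again
a lattice polytope. -/
def IsReflexive {n : ℕ} (Q : Set (Fin n → ℝ)) : Prop :=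
  IsLatticePolytope Q ∧ (0 : Fin n → ℝ) ∈ interior Q ∧ IsLatticePolytope (dualPolytope Q)

section aux
variable {n : ℕ}
noncomputable def pairL (v : Fin n → ℝ) : (Fin n → ℝ) →ₗ[ℝ] ℝ where
  toFun x := ∑ i, x i * v i
  map_add' x y := by simp [add_mul, Finset.sum_add_distrib]
  map_smul' c x := by simp [Finset.mul_sum, mul_assoc]
lemma pairL_apply (v x : Fin n → ℝ) : pairL v x = ∑ i, x i * v i := rfl
lemma pairL_comm (v x : Fin n → ℝ) : pairL v x = pairL x v := by
  simp only [pairL_apply]; exact Finset.sum_congr rfl fun i _ => mul_comm _ _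
lemma pairL_single (x : Fin n → ℝ) (k : Fin n) :
    pairL x (Pi.single k 1 : Fin n → ℝ) = x k := by
  rw [pairL_apply, Finset.sum_eq_single k]
  · simp
  · intro b _ hb; simp [Pi.single_apply, hb]
  · simp
lemma coeVec_single (k : Fin n) : coeVec (Pi.single k 1) = (Pi.single k 1 : Fin n → ℝ) := by
  funext j
  rcases eq_or_ne j k with rfl | hj
  · simp [coeVec]
  · simp [coeVec, Pi.single_apply, hj]
lemma coeVec_sum_smul {m : ℕ} (c : Fin m → ℤ) (v : Fin m → Fin n → ℤ) :
    coeVec (∑ i, c i • v i) = ∑ i, (c i : ℝ) • coeVec (v i) := by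
  funext k
  simp only [coeVec, Finset.sum_apply, Pi.smul_apply, smul_eq_mul]
  push_cast; rfl
lemma pairL_coe_sum_smul {m : ℕ} (u : Fin n → ℝ) (c : Fin m → ℤ) (v : Fin m → Fin n → ℤ) :
    pairL u (coeVec (∑ i, c i • v i)) = ∑ i, (c i : ℝ) * pairL u (coeVec (v i)) := by
  rw [coeVec_sum_smul, map_sum]
  exact Finset.sum_congr rfl fun i _ => by rw [map_smul, smul_eq_mul]

-- NEW PART
lemma span_coe_top (ρ : Fin (n + 1) → Fin n → ℤ)
    (hgen : Submodule.span ℤ (Set.range ρ) = ⊤) :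
    Submodule.span ℝ (Set.range fun i => coeVec (ρ i)) = ⊤ := by
  rw [eq_top_iff]
  rintro x -
  have hsingle : ∀ k : Fin n,
      (Pi.single k 1 : Fin n → ℝ) ∈ Submodule.span ℝ (Set.range fun i => coeVec (ρ i)) := by
    intro k
    have hk : (Pi.single k 1 : Fin n → ℤ) ∈ Submodule.span ℤ (Set.range ρ) := by
      rw [hgen]; trivial
    obtain ⟨c, hc⟩ := (Submodule.mem_span_range_iff_exists_fun ℤ).mp hk
    have := congrArg coeVec hc
    rw [coeVec_sum_smul, coeVec_single] at this
    rw [← this]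
    exact Submodule.sum_mem _ fun i _ =>
      Submodule.smul_mem _ _ (Submodule.subset_span ⟨i, rfl⟩)
  have hx : x = ∑ k, x k • (Pi.single k 1 : Fin n → ℝ) := by
    funext m
    simp only [Finset.sum_apply, Pi.smul_apply, smul_eq_mul]
    rw [Finset.sum_eq_single m]
    · simp
    · intro b _ hb; simp [Pi.single_apply, Ne.symm hb]
    · simp
  rw [hx]
  exact Submodule.sum_mem _ fun k _ => Submodule.smul_mem _ _ (hsingle k)

lemma pair_ext (ρ : Fin (n + 1) → Fin n → ℤ)
    (hgen : Submodule.span ℤ (Set.range ρ) = ⊤) {x y : Fin n → ℝ}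
    (hxy : ∀ i, pairL (coeVec (ρ i)) x = pairL (coeVec (ρ i)) y) : x = y := by
  have hker : Submodule.span ℝ (Set.range fun i => coeVec (ρ i)) ≤
      LinearMap.ker (pairL x - pairL y) := by
    rw [Submodule.span_le]
    rintro _ ⟨i, rfl⟩
    have h := hxy i
    rw [pairL_comm _ x, pairL_comm _ y] at h
    simp [LinearMap.mem_ker, h]
  rw [span_coe_top ρ hgen] at hker
  have h0 : pairL x - pairL y = 0 := LinearMap.ker_eq_top.mp (top_le_iff.mp hker)
  funext k
  have := LinearMap.congr_fun h0 (Pi.single k 1 : Fin n → ℝ)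
  simpa [pairL_single, sub_eq_zero] using this

lemma rel_coord (ρ : Fin (n + 1) → Fin n → ℤ) (lam : Fin (n + 1) → ℤ)
    (hrel : ∑ i, lam i • ρ i = 0) (k : Fin n) :
    ∑ i, (lam i : ℝ) * (ρ i k : ℝ) = 0 := by
  have h1 := congrFun hrel k
  simp only [Finset.sum_apply, Pi.smul_apply, smul_eq_mul, Pi.zero_apply] at h1
  exact_mod_cast h1

lemma rel_real (ρ : Fin (n + 1) → Fin n → ℤ) (lam : Fin (n + 1) → ℤ)
    (hrel : ∑ i, lam i • ρ i = 0) (x : Fin n → ℝ) :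
    ∑ i, (lam i : ℝ) * pairL (coeVec (ρ i)) x = 0 := by
  have step : ∀ i, (lam i : ℝ) * pairL (coeVec (ρ i)) x
      = ∑ k, x k * ((lam i : ℝ) * (ρ i k : ℝ)) := by
    intro i
    rw [pairL_apply, Finset.mul_sum]
    exact Finset.sum_congr rfl fun k _ => by simp [coeVec]; ring
  rw [Finset.sum_congr rfl fun i _ => step i, Finset.sum_comm]
  have : ∀ k, ∑ i, x k * ((lam i : ℝ) * (ρ i k : ℝ)) = 0 := by
    intro k
    rw [← Finset.mul_sum, rel_coord ρ lam hrel k, mul_zero]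
  simp [this]

lemma pair_ext_ne (ρ : Fin (n + 1) → Fin n → ℤ) (lam : Fin (n + 1) → ℤ)
    (hgen : Submodule.span ℤ (Set.range ρ) = ⊤) (hpos : ∀ i, 0 < lam i)
    (hrel : ∑ i, lam i • ρ i = 0) (j : Fin (n + 1)) {x y : Fin n → ℝ}
    (hxy : ∀ i, i ≠ j → pairL (coeVec (ρ i)) x = pairL (coeVec (ρ i)) y) : x = y := by
  apply pair_ext ρ hgen
  intro i
  rcases eq_or_ne i j with rfl | hij
  · have hx := rel_real ρ lam hrel x
    have hy := rel_real ρ lam hrel y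
    rw [← Finset.sum_erase_add _ _ (Finset.mem_univ i)] at hx hy
    have he : ∑ k ∈ Finset.univ.erase i, (lam k : ℝ) * pairL (coeVec (ρ k)) x
        = ∑ k ∈ Finset.univ.erase i, (lam k : ℝ) * pairL (coeVec (ρ k)) y :=
      Finset.sum_congr rfl fun k hk => by rw [hxy k (Finset.ne_of_mem_erase hk)]
    have hli : ((lam i : ℝ)) ≠ 0 := by exact_mod_cast (hpos i).ne'
    apply mul_left_cancel₀ hli
    linarith
  · exact hxy i hij

/-- The dual polytope is cut out by the vertex inequalities. -/
lemma dual_desc (ρ : Fin (n + 1) → Fin n → ℤ) :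
    {u : Fin n → ℝ | ∀ v ∈ convexHull ℝ (Set.range fun i => coeVec (ρ i)),
        -1 ≤ ∑ i, u i * v i} =
    {x : Fin n → ℝ | ∀ i, -1 ≤ pairL (coeVec (ρ i)) x} := by
  ext u
  constructor
  · intro hu i
    have := hu (coeVec (ρ i)) (subset_convexHull ℝ _ ⟨i, rfl⟩)
    rw [pairL_apply]; exact this
  · intro hu v hv
    have hsub : convexHull ℝ (Set.range fun i => coeVec (ρ i)) ⊆
        {w : Fin n → ℝ | -1 ≤ pairL u w} := by
      apply convexHull_min
      · rintro _ ⟨i, rfl⟩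
        rw [Set.mem_setOf_eq, pairL_comm]
        exact hu i
      · exact convex_halfSpace_ge (pairL u).isLinear (-1)
    have := hsub hv
    rw [Set.mem_setOf_eq, pairL_apply] at this
    calc (-1 : ℝ) ≤ ∑ i, v i * u i := this
    _ = ∑ i, u i * v i := Finset.sum_congr rfl fun i _ => mul_comm _ _

lemma exists_dualvtx (ρ : Fin (n + 1) → Fin n → ℤ) (lam : Fin (n + 1) → ℤ)
    (hgen : Submodule.span ℤ (Set.range ρ) = ⊤) (hpos : ∀ i, 0 < lam i)
    (hrel : ∑ i, lam i • ρ i = 0) (j : Fin (n + 1)) :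
    ∃ u : Fin n → ℝ, (∀ i, i ≠ j → pairL (coeVec (ρ i)) u = -1) ∧
      (lam j : ℝ) * pairL (coeVec (ρ j)) u = (∑ i, (lam i : ℝ)) - lam j := by
  classical
  let T : (Fin n → ℝ) →ₗ[ℝ] ({i : Fin (n + 1) // i ≠ j} → ℝ) :=
    LinearMap.pi fun i => pairL (coeVec (ρ i.1))
  have hinj : Function.Injective T := by
    rw [← LinearMap.ker_eq_bot, Submodule.eq_bot_iff]
    intro x hx
    have hxi : ∀ i, i ≠ j → pairL (coeVec (ρ i)) x = pairL (coeVec (ρ i)) (0 : Fin n → ℝ) := by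
      intro i hi
      have := congrFun (LinearMap.mem_ker.mp hx) ⟨i, hi⟩
      simpa [T] using this
    exact pair_ext_ne ρ lam hgen hpos hrel j hxi
  have hcard : Fintype.card {i : Fin (n + 1) // i ≠ j} = n := by
    simp [Fintype.card_subtype_compl]
  have hsurj : Function.Surjective T := by
    have hfr : Module.finrank ℝ (Fin n → ℝ) = Module.finrank ℝ ({i : Fin (n + 1) // i ≠ j} → ℝ) := by
      rw [Module.finrank_fintype_fun_eq_card, Module.finrank_fintype_fun_eq_card, hcard,
        Fintype.card_fin]
    exact (LinearMap.injective_iff_surjective_of_finrank_eq_finrank hfr).mp hinj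
  obtain ⟨u, hu⟩ := hsurj (fun _ => -1)
  have hu1 : ∀ i, i ≠ j → pairL (coeVec (ρ i)) u = -1 := by
    intro i hi
    have := congrFun hu ⟨i, hi⟩
    simpa [T] using this
  refine ⟨u, hu1, ?_⟩
  have h0 := rel_real ρ lam hrel u
  rw [← Finset.sum_erase_add _ _ (Finset.mem_univ j)] at h0
  have he : ∑ i ∈ Finset.univ.erase j, (lam i : ℝ) * pairL (coeVec (ρ i)) u
      = ∑ i ∈ Finset.univ.erase j, -(lam i : ℝ) :=
    Finset.sum_congr rfl fun i hi => by
      rw [hu1 i (Finset.ne_of_mem_erase hi)]; ring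
  have hA : ∑ i ∈ Finset.univ.erase j, (lam i : ℝ) = (∑ i, (lam i : ℝ)) - lam j := by
    have := Finset.sum_erase_add Finset.univ (fun i => (lam i : ℝ)) (Finset.mem_univ j)
    linarith
  rw [he, Finset.sum_neg_distrib, hA] at h0
  linarith

lemma integral_of_pairs (ρ : Fin (n + 1) → Fin n → ℤ)
    (hgen : Submodule.span ℤ (Set.range ρ) = ⊤) {u : Fin n → ℝ}
    (hu : ∀ i, ∃ m : ℤ, pairL (coeVec (ρ i)) u = m) :
    ∃ w : Fin n → ℤ, coeVec w = u := by
  classical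
  have key : ∀ k : Fin n, ∃ m : ℤ, u k = m := by
    intro k
    have hk : (Pi.single k 1 : Fin n → ℤ) ∈ Submodule.span ℤ (Set.range ρ) := by
      rw [hgen]; trivial
    obtain ⟨c, hc⟩ := (Submodule.mem_span_range_iff_exists_fun ℤ).mp hk
    choose m hm using hu
    refine ⟨∑ i, c i * m i, ?_⟩
    have h1 : pairL u (coeVec (∑ i, c i • ρ i)) = ∑ i, (c i : ℝ) * pairL u (coeVec (ρ i)) :=
      pairL_coe_sum_smul u c ρ
    rw [hc, coeVec_single, pairL_single] at h1
    rw [h1]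
    push_cast
    exact Finset.sum_congr rfl fun i _ => by rw [pairL_comm, hm i]
  choose w hw using key
  exact ⟨w, funext fun k => (hw k).symm⟩

lemma sum_pos_real (lam : Fin (n + 1) → ℤ) (hpos : ∀ i, 0 < lam i) :
    (0 : ℝ) < ∑ i, (lam i : ℝ) :=
  Finset.sum_pos (fun i _ => by exact_mod_cast hpos i) Finset.univ_nonempty

lemma dualvtx_mem (ρ : Fin (n + 1) → Fin n → ℤ) (lam : Fin (n + 1) → ℤ)
    (hpos : ∀ i, 0 < lam i) (j : Fin (n + 1)) {u : Fin n → ℝ}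
    (hu1 : ∀ i, i ≠ j → pairL (coeVec (ρ i)) u = -1)
    (hu2 : (lam j : ℝ) * pairL (coeVec (ρ j)) u = (∑ i, (lam i : ℝ)) - lam j) :
    ∀ i, -1 ≤ pairL (coeVec (ρ i)) u := by
  intro i
  rcases eq_or_ne i j with rfl | hij
  · have hli : (0 : ℝ) < (lam i : ℝ) := by exact_mod_cast hpos i
    have hH := sum_pos_real lam hpos
    nlinarith
  · rw [hu1 i hij]

lemma dualvtx_extreme (ρ : Fin (n + 1) → Fin n → ℤ) (lam : Fin (n + 1) → ℤ)
    (hgen : Submodule.span ℤ (Set.range ρ) = ⊤) (hpos : ∀ i, 0 < lam i)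
    (hrel : ∑ i, lam i • ρ i = 0) (j : Fin (n + 1)) {u : Fin n → ℝ}
    (hu1 : ∀ i, i ≠ j → pairL (coeVec (ρ i)) u = -1)
    (hu2 : (lam j : ℝ) * pairL (coeVec (ρ j)) u = (∑ i, (lam i : ℝ)) - lam j) :
    u ∈ Set.extremePoints ℝ {x : Fin n → ℝ | ∀ i, -1 ≤ pairL (coeVec (ρ i)) x} := by
  refine ⟨dualvtx_mem ρ lam hpos j hu1 hu2, ?_⟩
  intro x₁ h₁ x₂ h₂ hseg
  obtain ⟨a, b, ha, hb, hab, hx⟩ := hseg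
  have hcomb : ∀ v : Fin n → ℝ,
      pairL v u = a * pairL v x₁ + b * pairL v x₂ := by
    intro v
    rw [← hx]
    simp [map_add, map_smul, smul_eq_mul]
  have key : ∀ i, i ≠ j → pairL (coeVec (ρ i)) x₁ = -1 ∧ pairL (coeVec (ρ i)) x₂ = -1 := by
    intro i hi
    have h1 := h₁ i
    have h2 := h₂ i
    have hc := hcomb (coeVec (ρ i))
    rw [hu1 i hi] at hc
    constructor <;> nlinarith
  · exact pair_ext_ne ρ lam hgen hpos hrel j fun i hi => by
      rw [(key i hi).1, hu1 i hi]

lemma dual_hull (ρ : Fin (n + 1) → Fin n → ℤ) (lam : Fin (n + 1) → ℤ)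
    (hgen : Submodule.span ℤ (Set.range ρ) = ⊤) (hpos : ∀ i, 0 < lam i)
    (hrel : ∑ i, lam i • ρ i = 0) (u : Fin (n + 1) → Fin n → ℝ)
    (hu1 : ∀ j i, i ≠ j → pairL (coeVec (ρ i)) (u j) = -1)
    (hu2 : ∀ j, (lam j : ℝ) * pairL (coeVec (ρ j)) (u j) = (∑ i, (lam i : ℝ)) - lam j) :
    {x : Fin n → ℝ | ∀ i, -1 ≤ pairL (coeVec (ρ i)) x} = convexHull ℝ (Set.range u) := by
  have hH : (0 : ℝ) < ∑ i, (lam i : ℝ) := sum_pos_real lam hpos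
  apply Set.Subset.antisymm
  · intro x hx
    set H : ℝ := ∑ i, (lam i : ℝ) with hHdef
    set μ : Fin (n + 1) → ℝ := fun j => (lam j : ℝ) * (pairL (coeVec (ρ j)) x + 1) / H with hμ
    have hμ0 : ∀ j, 0 ≤ μ j := by
      intro j
      have hj := hx j
      have hlj : (0 : ℝ) ≤ (lam j : ℝ) := by exact_mod_cast (hpos j).le
      apply div_nonneg (mul_nonneg hlj (by linarith)) hH.le
    have hμ1 : ∑ j, μ j = 1 := by
      rw [hμ]
      rw [← Finset.sum_div]
      have : ∑ j, (lam j : ℝ) * (pairL (coeVec (ρ j)) x + 1)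
          = (∑ j, (lam j : ℝ) * pairL (coeVec (ρ j)) x) + ∑ j, (lam j : ℝ) := by
        rw [← Finset.sum_add_distrib]
        exact Finset.sum_congr rfl fun j _ => by ring
      rw [this, rel_real ρ lam hrel x, zero_add, ← hHdef, div_self hH.ne']
    have hxx : x = ∑ j, μ j • u j := by
      apply pair_ext ρ hgen
      intro i
      have hmap : pairL (coeVec (ρ i)) (∑ j, μ j • u j)
          = ∑ j, μ j * pairL (coeVec (ρ i)) (u j) := by
        rw [map_sum]
        exact Finset.sum_congr rfl fun j _ => by rw [map_smul, smul_eq_mul]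
      rw [hmap, ← Finset.sum_erase_add _ _ (Finset.mem_univ i)]
      have he : ∑ j ∈ Finset.univ.erase i, μ j * pairL (coeVec (ρ i)) (u j)
          = ∑ j ∈ Finset.univ.erase i, -(μ j) :=
        Finset.sum_congr rfl fun j hj => by
          rw [hu1 j i (Finset.ne_of_mem_erase hj).symm]; ring
      have hesum : ∑ j ∈ Finset.univ.erase i, μ j = 1 - μ i := by
        have := Finset.sum_erase_add Finset.univ μ (Finset.mem_univ i)
        rw [hμ1] at this
        linarith
      rw [he, Finset.sum_neg_distrib, hesum]
      have hli : (0 : ℝ) < (lam i : ℝ) := by exact_mod_cast hpos i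
      have hpii : pairL (coeVec (ρ i)) (u i) = (H - (lam i : ℝ)) / (lam i : ℝ) := by
        rw [eq_div_iff hli.ne', mul_comm]
        exact hu2 i
      rw [hpii, hμ]
      field_simp
      ring
    rw [hxx]
    have hmem : Finset.univ.centerMass μ u ∈ convexHull ℝ (Set.range u) :=
      Finset.centerMass_mem_convexHull _ (fun j _ => hμ0 j) (by rw [hμ1]; norm_num)
        (fun j _ => ⟨j, rfl⟩)
    rwa [Finset.centerMass_eq_of_sum_1 _ _ hμ1] at hmem
  · apply convexHull_min
    · rintro _ ⟨j, rfl⟩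
      exact dualvtx_mem ρ lam hpos j (hu1 j) (hu2 j)
    · intro x hx y hy a b ha hb hab
      intro i
      have h1 := hx i
      have h2 := hy i
      have : pairL (coeVec (ρ i)) (a • x + b • y)
          = a * pairL (coeVec (ρ i)) x + b * pairL (coeVec (ρ i)) y := by
        simp [map_add, map_smul, smul_eq_mul]
      rw [this]
      nlinarith

lemma zero_mem_interior (ρ : Fin (n + 1) → Fin n → ℤ) (lam : Fin (n + 1) → ℤ)
    (hgen : Submodule.span ℤ (Set.range ρ) = ⊤) (hpos : ∀ i, 0 < lam i)
    (hrel : ∑ i, lam i • ρ i = 0) :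
    (0 : Fin n → ℝ) ∈ interior (convexHull ℝ (Set.range fun i => coeVec (ρ i))) := by
  classical
  set H : ℝ := ∑ i, (lam i : ℝ) with hHdef
  have hH : (0 : ℝ) < H := sum_pos_real lam hpos
  set t : Fin (n + 1) → ℝ := fun i => (lam i : ℝ) / H with ht
  have ht0 : ∀ i, 0 < t i := fun i => div_pos (by exact_mod_cast hpos i) hH
  have ht1 : ∑ i, t i = 1 := by
    rw [ht, ← Finset.sum_div, ← hHdef, div_self hH.ne']
  have hti1 : ∀ i, t i ≤ 1 := by
    intro i
    rw [← ht1]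
    exact Finset.single_le_sum (fun k _ => (ht0 k).le) (Finset.mem_univ i)
  have hzero : (0 : Fin n → ℝ) = ∑ i, t i • coeVec (ρ i) := by
    funext k
    simp only [Finset.sum_apply, Pi.smul_apply, smul_eq_mul, Pi.zero_apply, ht]
    rw [eq_comm]
    calc ∑ i, (lam i : ℝ) / H * coeVec (ρ i) k
        = (∑ i, (lam i : ℝ) * (ρ i k : ℝ)) / H := by
          rw [Finset.sum_div]
          exact Finset.sum_congr rfl fun i _ => by rw [div_mul_eq_mul_div]; rfl
      _ = 0 := by rw [rel_coord ρ lam hrel k, zero_div]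
  -- nonempty interior
  have haff : affineSpan ℝ (Set.range fun i => coeVec (ρ i)) = ⊤ := by
    have hne : ((affineSpan ℝ (Set.range fun i => coeVec (ρ i)) : AffineSubspace ℝ (Fin n → ℝ)) :
        Set (Fin n → ℝ)).Nonempty :=
      ⟨coeVec (ρ 0), subset_affineSpan ℝ _ ⟨0, rfl⟩⟩
    rw [← AffineSubspace.direction_eq_top_iff_of_nonempty hne, direction_affineSpan]
    rw [eq_top_iff, ← span_coe_top ρ hgen, Submodule.span_le]
    rintro _ ⟨j, rfl⟩
    show coeVec (ρ j) ∈ _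
    have : coeVec (ρ j) = ∑ i, t i • (coeVec (ρ j) - coeVec (ρ i)) := by
      rw [Finset.sum_congr rfl fun i (_ : i ∈ Finset.univ) => smul_sub (t i) (coeVec (ρ j)) (coeVec (ρ i))]
      rw [Finset.sum_sub_distrib, ← Finset.sum_smul, ht1, one_smul, ← hzero, sub_zero]
    rw [this]
    refine Submodule.sum_mem _ fun i _ => Submodule.smul_mem _ _ ?_
    have := vsub_mem_vectorSpan ℝ (Set.mem_range_self j) (Set.mem_range_self i)
      (s := Set.range fun i => coeVec (ρ i))
    simpa using this
  have hint : (interior (convexHull ℝ (Set.range fun i => coeVec (ρ i)))).Nonempty := by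
    rw [(convex_convexHull ℝ _).interior_nonempty_iff_affineSpan_eq_top, affineSpan_convexHull]
    exact haff
  obtain ⟨z, hz⟩ := hint
  -- write z as a convex combination
  have hzP := interior_subset hz
  rw [convexHull_range_eq_exists_affineCombination] at hzP
  obtain ⟨s, w, hw0, hw1, hcomb⟩ := hzP
  set s' : Fin (n + 1) → ℝ := fun i => if i ∈ s then w i else 0 with hs'
  have hs'0 : ∀ i, 0 ≤ s' i := by
    intro i
    rw [hs']
    dsimp only
    split
    · exact hw0 i ‹_›
    · exact le_refl 0
  have hs'sum : ∑ i, s' i = 1 := by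
    rw [hs']
    dsimp only
    rw [Finset.sum_ite_mem, Finset.univ_inter]
    exact hw1
  have hs'le : ∀ i, s' i ≤ 1 := by
    intro i
    rw [← hs'sum]
    exact Finset.single_le_sum (fun k _ => hs'0 k) (Finset.mem_univ i)
  have hzrep : z = ∑ i, s' i • coeVec (ρ i) := by
    rw [← hcomb, Finset.affineCombination_eq_linear_combination s _ _ hw1]
    calc ∑ i ∈ s, w i • coeVec (ρ i)
        = ∑ i, (if i ∈ s then w i • coeVec (ρ i) else 0) := by
          rw [Finset.sum_ite_mem, Finset.univ_inter]
      _ = ∑ i, s' i • coeVec (ρ i) := Finset.sum_congr rfl fun i _ => by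
          rw [hs']; dsimp only; rw [ite_smul, zero_smul]
  set m : ℝ := Finset.univ.inf' Finset.univ_nonempty t with hm
  have hmin : ∀ i, m ≤ t i := fun i => Finset.inf'_le _ (Finset.mem_univ i)
  have hmpos : 0 < m := by
    rw [hm, Finset.lt_inf'_iff]
    exact fun i _ => ht0 i
  set ε : ℝ := m / 2 with hε
  have hε0 : 0 < ε := by rw [hε]; linarith
  have hε1 : ε < 1 := by
    have := hmin 0
    have := hti1 0
    rw [hε]; linarith
  have h1ε : 0 < 1 - ε := by linarith
  set c : Fin (n + 1) → ℝ := fun i => (t i - ε * s' i) / (1 - ε) with hc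
  have hc0 : ∀ i, 0 ≤ c i := by
    intro i
    apply div_nonneg _ h1ε.le
    have h2 : ε * s' i ≤ ε := mul_le_of_le_one_right hε0.le (hs'le i)
    have h3 := hmin i
    have h4 := ht0 i
    rw [hε] at h2 ⊢
    linarith
  have hcsum : ∑ i, c i = 1 := by
    rw [hc]
    dsimp only
    rw [← Finset.sum_div, div_eq_one_iff_eq h1ε.ne']
    rw [Finset.sum_sub_distrib, ht1, ← Finset.mul_sum, hs'sum, mul_one]
  set w' : Fin n → ℝ := ∑ i, c i • coeVec (ρ i) with hw'
  have hw'mem : w' ∈ convexHull ℝ (Set.range fun i => coeVec (ρ i)) := by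
    have hmem := Finset.centerMass_mem_convexHull Finset.univ (fun i _ => hc0 i)
      (by rw [hcsum]; norm_num)
      (fun i _ => Set.mem_range_self i (f := fun i => coeVec (ρ i)))
    rwa [Finset.centerMass_eq_of_sum_1 _ _ hcsum] at hmem
  have hkey : ε • z + (1 - ε) • w' = 0 := by
    rw [hzrep, hw', Finset.smul_sum, Finset.smul_sum, ← Finset.sum_add_distrib, hzero]
    apply Finset.sum_congr rfl
    intro i _
    rw [smul_smul, smul_smul, ← add_smul]
    congr 1
    rw [hc]
    dsimp only
    field_simp
    ring
  have hfin := (convex_convexHull ℝ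
      (Set.range fun i => coeVec (ρ i))).combo_interior_closure_mem_interior
    (a := ε) (b := 1 - ε) hz (subset_closure hw'mem) hε0 (by linarith) (by ring)
  rwa [hkey] at hfin
end aux


/-- **Gorenstein weighted projective spaces and unit partitions.**
The weighted projective space ℙ(λ₀,…,λₙ) is Gorenstein iff each λⱼ divides h = Σᵢλᵢ:
the simplex P with primitive vertices ρ₀,…,ρₙ generating ℤⁿ and satisfying Σᵢλᵢρᵢ = 0
is reflexive if and only if λⱼ ∣ Σᵢλᵢ for all j. -/
theorem wps_gorenstein_iff_weights_divide (n : ℕ) (ρ : Fin (n + 1) → Fin n → ℤ)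
    (hprim : ∀ i, Finset.univ.gcd (ρ i) = 1)
    (hgen : Submodule.span ℤ (Set.range ρ) = ⊤)
    (lam : Fin (n + 1) → ℤ) (hpos : ∀ i, 0 < lam i)
    (hgcd : Finset.univ.gcd lam = 1)
    (hrel : ∑ i, lam i • ρ i = 0) :
    IsReflexive (convexHull ℝ (Set.range fun i => coeVec (ρ i))) ↔
      ∀ j, lam j ∣ ∑ i, lam i := by
  classical
  have hdual : dualPolytope (convexHull ℝ (Set.range fun i => coeVec (ρ i)))
      = {x : Fin n → ℝ | ∀ i, -1 ≤ pairL (coeVec (ρ i)) x} := dual_desc ρ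
  constructor
  · rintro ⟨-, -, S, hS⟩ j
    obtain ⟨u, hu1, hu2⟩ := exists_dualvtx ρ lam hgen hpos hrel j
    have hext := dualvtx_extreme ρ lam hgen hpos hrel j hu1 hu2
    rw [← hdual, hS] at hext
    have humem : u ∈ coeVec '' (S : Set (Fin n → ℤ)) := extremePoints_convexHull_subset hext
    obtain ⟨w, -, hw⟩ := humem
    have hint : pairL (coeVec (ρ j)) u = ((∑ k, w k * ρ j k : ℤ) : ℝ) := by
      rw [← hw, pairL_apply]
      push_cast
      exact Finset.sum_congr rfl fun k _ => by simp [coeVec]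
    rw [hint] at hu2
    have hz : lam j * (∑ k, w k * ρ j k) = (∑ i, lam i) - lam j := by
      exact_mod_cast hu2
    exact ⟨(∑ k, w k * ρ j k) + 1, by rw [mul_add, mul_one]; linarith⟩
  · intro hdvd
    refine ⟨⟨Finset.image ρ Finset.univ, ?_⟩,
      zero_mem_interior ρ lam hgen hpos hrel, ?_⟩
    · congr 1
      rw [Finset.coe_image, Finset.coe_univ, Set.image_univ, ← Set.range_comp]
      rfl
    · choose u hu1 hu2 using exists_dualvtx ρ lam hgen hpos hrel
      have hWint : ∀ j, ∃ w : Fin n → ℤ, coeVec w = u j := by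
        intro j
        apply integral_of_pairs ρ hgen
        intro i
        rcases eq_or_ne i j with rfl | hij
        · obtain ⟨c, hc⟩ := hdvd i
          refine ⟨c - 1, ?_⟩
          have hli : ((lam i : ℝ)) ≠ 0 := by exact_mod_cast (hpos i).ne'
          have hcR : (∑ k, (lam k : ℝ)) = (lam i : ℝ) * (c : ℝ) := by exact_mod_cast hc
          apply mul_left_cancel₀ hli
          rw [hu2 i, hcR]
          push_cast
          ring
        · exact ⟨-1, by rw [hu1 j i hij]; push_cast; ring⟩
      choose W hW using hWint
      refine ⟨Finset.image W Finset.univ, ?_⟩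
      rw [hdual, dual_hull ρ lam hgen hpos hrel u hu1 hu2]
      congr 1
      rw [Finset.coe_image, Finset.coe_univ, Set.image_univ, ← Set.range_comp,
        show coeVec ∘ W = u from funext hW]
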